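/- arXiv:1207.5360 — 5 statements merged into one kernel-verified Lean document; each statement's English description precedes it below -/
import Mathlib

section
/- Let M be a (2n+2m)×(2n+2m) real matrix of the block form M = [[Ψ, A, 0], [0, I_m, 0], [B, C, I_m]], where Ψ is a 2n×2n block, A is 2n×m, B is m×2n, C is m×m, and I_m denotes the m×m identity. Then M is symplectic with respect to the standard symplectic structure J̃₀ = [[J₀,0,0],[0,0,-I],[0,I,0]] if and only if Ψ is symplectic (Ψᵀ J₀ Ψ = J₀) and there exist a 2n×m matrix X and a symmetric m×m matrix E with A = ΨX, B = XᵀJ₀, and C = E + (1/2) Xᵀ J₀ X. -/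
open Matrix

/-- Index type for `ℝ^{2n}` viewed as `ℝ^n ⊕ ℝ^n`. -/
abbrev V (n : ℕ) := Fin n ⊕ Fin n

/-- The standard complex structure `J₀ = [[0,-I],[I,0]]` on `ℝ^{2n}`. -/
noncomputable def J0 (n : ℕ) : Matrix (V n) (V n) ℝ :=
  Matrix.fromBlocks 0 (-1) 1 0

/-- The standard complex structure `J̃₀` on `ℝ^{2n} ⊕ ℝ^m ⊕ ℝ^m`. -/
noncomputable def Jt0 (n m : ℕ) : Matrix (V n ⊕ V m) (V n ⊕ V m) ℝ :=
  Matrix.fromBlocks (J0 n) 0 0 (J0 m)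

/-- `M` is symplectic with respect to the structure `J`. -/
def IsSympl {ι : Type*} [Fintype ι] (J M : Matrix ι ι ℝ) : Prop :=
  Mᵀ * J * M = J

lemma aux1 {a b c : Type*} (X Y : Matrix a b ℝ) (Z W : Matrix a c ℝ) :
    Matrix.fromCols X Z + Matrix.fromCols Y W = Matrix.fromCols (X + Y) (Z + W) := by
  ext i (j | j) <;> simp

lemma aux2 {a b c : Type*} (X Y : Matrix a b ℝ) (Z W : Matrix c b ℝ) :
    Matrix.fromRows X Z + Matrix.fromRows Y W = Matrix.fromRows (X + Y) (Z + W) := by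
  ext (i | i) j <;> simp

lemma aux3 {a b c : Type*} (X : Matrix a b ℝ) (Z : Matrix a c ℝ) :
    Matrix.fromCols X Z = 0 ↔ X = 0 ∧ Z = 0 := by
  rw [← Matrix.fromCols_zero]
  exact Matrix.fromCols_inj.eq_iff

lemma aux4 {a b c : Type*} (X : Matrix a b ℝ) (Z : Matrix c b ℝ) :
    Matrix.fromRows X Z = 0 ↔ X = 0 ∧ Z = 0 := by
  rw [← Matrix.fromRows_zero]
  exact Matrix.fromRows_inj.eq_iff

lemma aux5 {a b c d : Type*} (X : Matrix a c ℝ) (P : Matrix a c ℝ) (Q : Matrix a d ℝ)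
    (R : Matrix b c ℝ) (S : Matrix b d ℝ) :
    Matrix.fromCols (Matrix.fromRows X (0 : Matrix b c ℝ)) (0 : Matrix (a ⊕ b) d ℝ)
      + Matrix.fromBlocks P Q R S = Matrix.fromBlocks (X + P) Q R S := by
  ext (i | i) (j | j) <;> simp [Matrix.fromBlocks, Matrix.fromCols, Matrix.fromRows_apply_inl, Matrix.fromRows_apply_inr]

lemma cond_iff {n m : ℕ} (Ψ : Matrix (V n) (V n) ℝ) (A : Matrix (V n) (Fin m) ℝ)
    (B : Matrix (Fin m) (V n) ℝ) (C : Matrix (Fin m) (Fin m) ℝ) :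
    IsSympl (Jt0 n m)
      (Matrix.fromBlocks Ψ (Matrix.fromCols A 0)
        (Matrix.fromRows 0 B) (Matrix.fromBlocks 1 0 C 1)) ↔
    (Ψᵀ * J0 n * Ψ = J0 n ∧ Ψᵀ * J0 n * A + Bᵀ = 0 ∧ Aᵀ * J0 n * Ψ = B ∧
      Aᵀ * (J0 n) * A + Cᵀ = C) := by
  unfold IsSympl Jt0
  rw [show (J0 m) = Matrix.fromBlocks 0 (-1) 1 0 from rfl]
  simp [Matrix.fromBlocks_transpose, Matrix.transpose_fromCols, Matrix.transpose_fromRows,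
    Matrix.fromBlocks_multiply, Matrix.fromCols_mul_fromRows, Matrix.fromRows_mul,
    Matrix.mul_fromCols, Matrix.fromCols_mul_fromBlocks, Matrix.fromBlocks_mul_fromRows,
    Matrix.fromRows_mul_fromCols, Matrix.fromBlocks_inj, Matrix.mul_add, Matrix.add_mul,
    aux1, aux2, aux3, aux4, aux5, sub_eq_iff_eq_add, add_neg_eq_zero, ← add_assoc]


lemma J0_transpose (n : ℕ) : (J0 n)ᵀ = -(J0 n) := by
  simp [J0, Matrix.fromBlocks_transpose, Matrix.fromBlocks_neg]

lemma J0_mul_J0 (n : ℕ) : J0 n * (-(J0 n)) = 1 := by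
  simp [J0, Matrix.fromBlocks_multiply, Matrix.fromBlocks_neg, ← Matrix.fromBlocks_one]

/-- A block matrix `[[Ψ, A, 0],[0, I, 0],[B, C, I]]` is symplectic iff `Ψ` is
symplectic and `A = ΨX`, `B = XᵀJ₀`, `C = E + ½ XᵀJ₀X` for some `X` and some
symmetric `E`. -/
theorem stmt0 {n m : ℕ} (Ψ : Matrix (V n) (V n) ℝ) (A : Matrix (V n) (Fin m) ℝ)
    (B : Matrix (Fin m) (V n) ℝ) (C : Matrix (Fin m) (Fin m) ℝ) :
    IsSympl (Jt0 n m)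
      (Matrix.fromBlocks Ψ (Matrix.fromCols A 0)
        (Matrix.fromRows 0 B) (Matrix.fromBlocks 1 0 C 1)) ↔
      (IsSympl (J0 n) Ψ ∧ ∃ (X : Matrix (V n) (Fin m) ℝ) (E : Matrix (Fin m) (Fin m) ℝ),
        Eᵀ = E ∧ A = Ψ * X ∧ B = Xᵀ * J0 n ∧
          C = E + (1 / 2 : ℝ) • (Xᵀ * J0 n * X)) := by
  rw [cond_iff]
  unfold IsSympl
  constructor
  · rintro ⟨hS, h2, h3, h4⟩
    refine ⟨hS, ?_⟩
    haveI : Invertible (J0 n) := invertibleOfRightInverse _ _ (J0_mul_J0 n)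
    haveI : Invertible Ψ := invertibleOfLeftInverse _ (⅟(J0 n) * Ψᵀ * J0 n) (by
      calc ⅟(J0 n) * Ψᵀ * J0 n * Ψ = ⅟(J0 n) * (Ψᵀ * J0 n * Ψ) := by
            simp only [Matrix.mul_assoc]
        _ = 1 := by rw [hS, invOf_mul_self])
    obtain ⟨X, hA⟩ : ∃ X, A = Ψ * X :=
      ⟨⅟Ψ * A, by rw [← Matrix.mul_assoc, mul_invOf_self, Matrix.one_mul]⟩
    have hB : B = Xᵀ * J0 n := by
      rw [← h3, hA, Matrix.transpose_mul]
      calc Xᵀ * Ψᵀ * J0 n * Ψ = Xᵀ * (Ψᵀ * J0 n * Ψ) := by simp only [Matrix.mul_assoc]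
        _ = Xᵀ * J0 n := by rw [hS]
    have hXJX : Xᵀ * J0 n * X = Aᵀ * J0 n * A := by
      rw [hA, Matrix.transpose_mul]
      calc Xᵀ * J0 n * X = Xᵀ * (Ψᵀ * J0 n * Ψ) * X := by rw [hS]
        _ = Xᵀ * Ψᵀ * J0 n * (Ψ * X) := by simp only [Matrix.mul_assoc]
    have h5 : (Xᵀ * J0 n * X)ᵀ = -(Xᵀ * J0 n * X) := by
      rw [Matrix.transpose_mul, Matrix.transpose_mul, Matrix.transpose_transpose, J0_transpose]
      simp [Matrix.neg_mul, Matrix.mul_neg, Matrix.mul_assoc]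
    have hC' : Cᵀ = C - Xᵀ * J0 n * X := by
      rw [hXJX]; exact eq_sub_of_add_eq' h4
    refine ⟨X, C - (1 / 2 : ℝ) • (Xᵀ * J0 n * X), ?_, hA, hB, by module⟩
    rw [Matrix.transpose_sub, Matrix.transpose_smul, h5, hC']
    module
  · rintro ⟨hS, X, E, hE, hA, hB, hC⟩
    have hJX : Ψᵀ * J0 n * (Ψ * X) = J0 n * X := by
      calc Ψᵀ * J0 n * (Ψ * X) = (Ψᵀ * J0 n * Ψ) * X := by simp only [Matrix.mul_assoc]
        _ = J0 n * X := by rw [hS]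
    have hAJ : (Ψ * X)ᵀ * J0 n * Ψ = Xᵀ * J0 n := by
      rw [Matrix.transpose_mul]
      calc Xᵀ * Ψᵀ * J0 n * Ψ = Xᵀ * (Ψᵀ * J0 n * Ψ) := by simp only [Matrix.mul_assoc]
        _ = Xᵀ * J0 n := by rw [hS]
    have hXJX : (Ψ * X)ᵀ * J0 n * (Ψ * X) = Xᵀ * J0 n * X := by
      rw [Matrix.transpose_mul]
      calc Xᵀ * Ψᵀ * J0 n * (Ψ * X) = Xᵀ * (Ψᵀ * J0 n * Ψ) * X := by
            simp only [Matrix.mul_assoc]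
        _ = Xᵀ * J0 n * X := by rw [hS]
    have h5 : (Xᵀ * J0 n * X)ᵀ = -(Xᵀ * J0 n * X) := by
      rw [Matrix.transpose_mul, Matrix.transpose_mul, Matrix.transpose_transpose, J0_transpose]
      simp [Matrix.neg_mul, Matrix.mul_neg, Matrix.mul_assoc]
    refine ⟨hS, ?_, ?_, ?_⟩
    · rw [hA, hB, hJX, Matrix.transpose_mul, J0_transpose, Matrix.transpose_transpose]
      simp [Matrix.neg_mul]
    · rw [hA, hB, hAJ]
    · rw [hA, hXJX, hC, Matrix.transpose_add, Matrix.transpose_smul, hE, h5]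
      module
end

section
/- For any M = M(Ψ,X,E) ∈ 𝒮_{n,m} with Ψ ∈ Sp(2n), X ∈ Mat_{2n,m}(R), E symmetric, the kernel of M − I contains {0} ⊕ {0} ⊕ R^m, and dim ker(M − I) > m if and only if the (2n+m)×(2n+m) matrix [[Ψ − I, ΨX],[XᵀJ₀, E + (1/2)XᵀJ₀X]] is singular. -/
open Matrix

/-- `Ψ` is symplectic: `Ψᵀ J₀ Ψ = J₀`. -/
def IsSymplectic {n : ℕ} (Ψ : Matrix (V n) (V n) ℝ) : Prop :=
  Ψᵀ * J0 n * Ψ = J0 n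

/-- The block matrix `M(Ψ,X,E) = [[Ψ, ΨX, 0],[0, I, 0],[XᵀJ₀, E + ½XᵀJ₀X, I]]`. -/
noncomputable def Mblk {n m : ℕ} (Ψ : Matrix (V n) (V n) ℝ) (X : Matrix (V n) (Fin m) ℝ)
    (E : Matrix (Fin m) (Fin m) ℝ) : Matrix (V n ⊕ V m) (V n ⊕ V m) ℝ :=
  Matrix.fromBlocks Ψ (Matrix.fromCols (Ψ * X) 0)
    (Matrix.fromRows 0 (Xᵀ * J0 n))
    (Matrix.fromBlocks 1 0 (E + (1 / 2 : ℝ) • (Xᵀ * J0 n * X)) 1)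

noncomputable def Ablk {n m : ℕ} (Ψ : Matrix (V n) (V n) ℝ) (X : Matrix (V n) (Fin m) ℝ)
    (E : Matrix (Fin m) (Fin m) ℝ) : Matrix (V n ⊕ Fin m) (V n ⊕ Fin m) ℝ :=
  Matrix.fromBlocks (Ψ - 1) (Ψ * X) (Xᵀ * J0 n) (E + (1 / 2 : ℝ) • (Xᵀ * J0 n * X))

lemma Mblk_mulVec {n m : ℕ} (Ψ : Matrix (V n) (V n) ℝ) (X : Matrix (V n) (Fin m) ℝ)
    (E : Matrix (Fin m) (Fin m) ℝ) (x : V n → ℝ) (y z : Fin m → ℝ) :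
    (Mblk Ψ X E).mulVec (Sum.elim x (Sum.elim y z)) =
      Sum.elim (Ψ.mulVec x + (Ψ * X).mulVec y)
        (Sum.elim y ((Xᵀ * J0 n).mulVec x + (E + (1/2 : ℝ) • (Xᵀ * J0 n * X)).mulVec y + z)) := by
  funext i
  rcases i with i | (j | j) <;>
    simp [Mblk, fromBlocks_mulVec, fromRows_mulVec, add_assoc]

lemma mem_ker_iff {n m : ℕ} (Ψ : Matrix (V n) (V n) ℝ) (X : Matrix (V n) (Fin m) ℝ)
    (E : Matrix (Fin m) (Fin m) ℝ) (v : V n ⊕ V m → ℝ) :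
    v ∈ LinearMap.ker ((Mblk Ψ X E).mulVecLin - LinearMap.id) ↔
      (Ablk Ψ X E).mulVec
        (Sum.elim (fun i => v (Sum.inl i)) (fun j => v (Sum.inr (Sum.inl j)))) = 0 := by
  set x : V n → ℝ := fun i => v (Sum.inl i) with hx
  set y : Fin m → ℝ := fun j => v (Sum.inr (Sum.inl j)) with hy
  set z : Fin m → ℝ := fun j => v (Sum.inr (Sum.inr j)) with hz
  have hv : v = Sum.elim x (Sum.elim y z) := by
    funext i; rcases i with i | (j | j) <;> rfl
  rw [LinearMap.mem_ker, LinearMap.sub_apply, LinearMap.id_apply, sub_eq_zero,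
    Matrix.mulVecLin_apply, hv, Mblk_mulVec]
  have hA : (Ablk Ψ X E).mulVec (Sum.elim x y) =
      Sum.elim ((Ψ - 1).mulVec x + (Ψ * X).mulVec y)
        ((Xᵀ * J0 n).mulVec x + (E + (1/2 : ℝ) • (Xᵀ * J0 n * X)).mulVec y) := by
    rw [Ablk, fromBlocks_mulVec]; rfl
  rw [hA]
  constructor
  · intro h
    have h1 := congrArg (fun f => f ∘ Sum.inl) h
    have h2 := congrArg (fun f => f ∘ (Sum.inr ∘ Sum.inr)) h
    simp only [Sum.elim_comp_inl] at h1
    funext i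
    rcases i with i | j
    · have := congrFun h1 i
      simp only [Pi.add_apply] at this
      simp only [Sum.elim_inl, Pi.add_apply, sub_mulVec, Pi.sub_apply, one_mulVec,
        Pi.zero_apply]
      linarith
    · have := congrFun h2 j
      simp only [Function.comp_apply, Sum.elim_inr, Pi.add_apply] at this
      simp only [Sum.elim_inr, Pi.zero_apply, Pi.add_apply]
      linarith
  · intro h
    have h1 := congrArg (fun f => f ∘ Sum.inl) h
    have h2 := congrArg (fun f => f ∘ Sum.inr) h
    simp only [Sum.elim_comp_inl, Sum.elim_comp_inr] at h1 h2
    funext i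
    rcases i with i | (j | j)
    · have := congrFun h1 i
      simp only [Pi.add_apply, Function.comp_apply, Pi.zero_apply, sub_mulVec, Pi.sub_apply,
        one_mulVec] at this
      simp only [Sum.elim_inl, Pi.add_apply]
      linarith
    · rfl
    · have := congrFun h2 j
      simp only [Pi.add_apply, Function.comp_apply, Pi.zero_apply] at this
      simp only [Sum.elim_inr, Pi.add_apply]
      linarith

noncomputable def kerEquiv {n m : ℕ} (Ψ : Matrix (V n) (V n) ℝ) (X : Matrix (V n) (Fin m) ℝ)
    (E : Matrix (Fin m) (Fin m) ℝ) :
    LinearMap.ker ((Mblk Ψ X E).mulVecLin - LinearMap.id) ≃ₗ[ℝ]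
      LinearMap.ker (Ablk Ψ X E).mulVecLin × (Fin m → ℝ) where
  toFun v := (⟨Sum.elim (fun i => v.1 (Sum.inl i)) (fun j => v.1 (Sum.inr (Sum.inl j))), by
      rw [LinearMap.mem_ker, Matrix.mulVecLin_apply]
      exact (mem_ker_iff Ψ X E v.1).mp v.2⟩,
    fun j => v.1 (Sum.inr (Sum.inr j)))
  map_add' v w := by
    refine Prod.ext (Subtype.ext ?_) ?_ <;> funext i
    · rcases i with i | j <;> rfl
    · rfl
  map_smul' c v := by
    refine Prod.ext (Subtype.ext ?_) ?_ <;> funext i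
    · rcases i with i | j <;> rfl
    · rfl
  invFun p := ⟨Sum.elim (fun i => p.1.1 (Sum.inl i)) (Sum.elim (fun j => p.1.1 (Sum.inr j)) p.2),
    by
      rw [mem_ker_iff]
      have h : (Sum.elim (fun i =>
          (Sum.elim (fun i => p.1.1 (Sum.inl i)) (Sum.elim (fun j => p.1.1 (Sum.inr j)) p.2))
            (Sum.inl i))
          (fun j => (Sum.elim (fun i => p.1.1 (Sum.inl i))
            (Sum.elim (fun j => p.1.1 (Sum.inr j)) p.2)) (Sum.inr (Sum.inl j))) : V n ⊕ Fin m → ℝ)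
          = p.1.1 := by
        funext i; rcases i with i | j <;> rfl
      rw [h]
      have := p.1.2
      rwa [LinearMap.mem_ker, Matrix.mulVecLin_apply] at this⟩
  left_inv v := by
    refine Subtype.ext ?_
    funext i; rcases i with i | (j | j) <;> rfl
  right_inv p := by
    refine Prod.ext (Subtype.ext ?_) ?_
    · funext i; rcases i with i | j <;> rfl
    · rfl

theorem stmt7' {n m : ℕ} (Ψ : Matrix (V n) (V n) ℝ) (X : Matrix (V n) (Fin m) ℝ)
    (E : Matrix (Fin m) (Fin m) ℝ) :
    (∀ v : Fin m → ℝ,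
      (Mblk Ψ X E).mulVec (Sum.elim (0 : V n → ℝ) (Sum.elim (0 : Fin m → ℝ) v)) =
        Sum.elim (0 : V n → ℝ) (Sum.elim (0 : Fin m → ℝ) v)) ∧
    (m < Module.finrank ℝ
        (LinearMap.ker ((Mblk Ψ X E).mulVecLin - LinearMap.id)) ↔
      (Matrix.fromBlocks (Ψ - 1) (Ψ * X) (Xᵀ * J0 n)
        (E + (1 / 2 : ℝ) • (Xᵀ * J0 n * X))).det = 0) := by
  constructor
  · intro v
    rw [Mblk_mulVec]
    simp
  · have hrank : Module.finrank ℝ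
        (LinearMap.ker ((Mblk Ψ X E).mulVecLin - LinearMap.id)) =
        Module.finrank ℝ (LinearMap.ker (Ablk Ψ X E).mulVecLin) + m := by
      rw [(kerEquiv Ψ X E).finrank_eq, Module.finrank_prod, Module.finrank_fin_fun]
    rw [hrank]
    have : (m < Module.finrank ℝ (LinearMap.ker (Ablk Ψ X E).mulVecLin) + m) ↔
        0 < Module.finrank ℝ (LinearMap.ker (Ablk Ψ X E).mulVecLin) := by omega
    rw [this, Module.finrank_pos_iff_exists_ne_zero]
    rw [show Matrix.fromBlocks (Ψ - 1) (Ψ * X) (Xᵀ * J0 n)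
        (E + (1 / 2 : ℝ) • (Xᵀ * J0 n * X)) = Ablk Ψ X E from rfl,
      ← Matrix.exists_mulVec_eq_zero_iff (M := Ablk Ψ X E)]
    constructor
    · rintro ⟨⟨v, hv⟩, hne⟩
      refine ⟨v, fun h => hne (Subtype.ext h), ?_⟩
      rwa [LinearMap.mem_ker, Matrix.mulVecLin_apply] at hv
    · rintro ⟨v, hne, hv⟩
      exact ⟨⟨v, by rwa [LinearMap.mem_ker, Matrix.mulVecLin_apply]⟩, fun h => hne (congrArg Subtype.val h)⟩


/-- The kernel of `M(Ψ,X,E) − I` contains `{0}⊕{0}⊕ℝ^m`, and its dimension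
exceeds `m` if and only if the matrix `[[Ψ−I, ΨX],[XᵀJ₀, E + ½XᵀJ₀X]]` is
singular. -/
theorem stmt7 {n m : ℕ} (Ψ : Matrix (V n) (V n) ℝ) (X : Matrix (V n) (Fin m) ℝ)
    (E : Matrix (Fin m) (Fin m) ℝ) (hΨ : IsSymplectic Ψ) (hE : Eᵀ = E) :
    (∀ v : Fin m → ℝ,
      (Mblk Ψ X E).mulVec (Sum.elim (0 : V n → ℝ) (Sum.elim (0 : Fin m → ℝ) v)) =
        Sum.elim (0 : V n → ℝ) (Sum.elim (0 : Fin m → ℝ) v)) ∧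
    (m < Module.finrank ℝ
        (LinearMap.ker ((Mblk Ψ X E).mulVecLin - LinearMap.id)) ↔
      (Matrix.fromBlocks (Ψ - 1) (Ψ * X) (Xᵀ * J0 n)
        (E + (1 / 2 : ℝ) • (Xᵀ * J0 n * X))).det = 0) := by
  exact stmt7' Ψ X E
end

section
/- Let M : [0,1] → Sp(2N) be a C¹ path, let E(t) ⊂ ker(M(t)−I) be a family of isotropic subspaces of the standard symplectic form ω₀ on R^{2N}, and decompose R^{2N} = E(t) ⊕ J₀E(t) ⊕ F(t) with F(t) the symplectic orthogonal of E(t) ⊕ J₀E(t). Fix t and β ≠ 0, and let Φ(t) ∈ Sp(2N) act as the identity on J₀E(t) ⊕ F(t) and send v₁ ∈ E(t) to v₁ + βJ₀v₁. Then for M̃(t) := M(t)Φ(t) one has ker(M̃(t) − I) = ker(M(t) − I) ∩ (J₀E(t) ⊕ F(t)). -/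
open Matrix

/-- The standard symplectic form `ω₀(u,v) = ⟨J₀u, v⟩` on `ℝ^{2N}`. -/
noncomputable def omega0 {N : ℕ} (u w : V N → ℝ) : ℝ :=
  (J0 N).mulVec u ⬝ᵥ w

lemma J0tJ0 {n : ℕ} : (J0 n)ᵀ * J0 n = 1 := by
  simp [J0, Matrix.fromBlocks_transpose, Matrix.fromBlocks_multiply,
    ← Matrix.fromBlocks_one]

lemma J0_mulVec_eq_zero {n : ℕ} {v : V n → ℝ} (h : (J0 n).mulVec v = 0) : v = 0 := by
  have : ((J0 n)ᵀ * J0 n).mulVec v = 0 := by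
    rw [← Matrix.mulVec_mulVec, h, Matrix.mulVec_zero]
  rwa [J0tJ0, Matrix.one_mulVec] at this

lemma symp_inv {n : ℕ} {M : Matrix (V n) (V n) ℝ} (hM : IsSymplectic M)
    (u v : V n → ℝ) : omega0 (M.mulVec u) (M.mulVec v) = omega0 u v := by
  simp only [omega0, Matrix.mulVec_mulVec, Matrix.dotProduct_mulVec]
  rw [← Matrix.mulVec_transpose, Matrix.mulVec_mulVec, ← mul_assoc, hM]

/-- Let `E ⊂ ker(M−I)` be an isotropic subspace, `F` the symplectic orthogonal
of `E ⊕ J₀E`, so `ℝ^{2N} = E ⊕ J₀E ⊕ F`, and let `Φ ∈ Sp(2N)` act as the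
identity on `J₀E ⊕ F` and send `v₁ ∈ E` to `v₁ + βJ₀v₁` with `β ≠ 0`. Then
`ker(MΦ − I) = ker(M − I) ∩ (J₀E ⊕ F)`. -/
theorem stmt10 {N : ℕ} (M Φ : Matrix (V N) (V N) ℝ) (β : ℝ) (hβ : β ≠ 0)
    (E F : Submodule ℝ (V N → ℝ))
    (hM : IsSymplectic M) (hΦ : IsSymplectic Φ)
    (hEker : ∀ v ∈ E, M.mulVec v = v)
    (hiso : ∀ u ∈ E, ∀ v ∈ E, omega0 u v = 0)
    (hF : ∀ w, w ∈ F ↔ ∀ v ∈ E ⊔ E.map (J0 N).mulVecLin, omega0 w v = 0)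
    (hspan : E ⊔ (E.map (J0 N).mulVecLin ⊔ F) = ⊤)
    (hdisj : E ⊓ (E.map (J0 N).mulVecLin ⊔ F) = ⊥)
    (hΦid : ∀ v ∈ E.map (J0 N).mulVecLin ⊔ F, Φ.mulVec v = v)
    (hΦE : ∀ v ∈ E, Φ.mulVec v = v + β • (J0 N).mulVec v) :
    LinearMap.ker ((M * Φ).mulVecLin - LinearMap.id) =
      LinearMap.ker (M.mulVecLin - LinearMap.id) ⊓
        (E.map (J0 N).mulVecLin ⊔ F) := by
  set G := E.map (J0 N).mulVecLin ⊔ F with hG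
  apply le_antisymm
  · intro w hw
    have hw' : (M * Φ).mulVec w = w := by
      have := hw
      simp only [LinearMap.mem_ker, LinearMap.sub_apply, LinearMap.id_apply,
        Matrix.mulVecLin_apply, sub_eq_zero] at this
      exact this
    have hwtop : w ∈ E ⊔ G := by rw [hspan]; trivial
    obtain ⟨v₁, hv₁, v₂, hv₂, hsum⟩ := Submodule.mem_sup.mp hwtop
    have hΦw : Φ.mulVec w = w + β • (J0 N).mulVec v₁ := by
      rw [← hsum, Matrix.mulVec_add, hΦE v₁ hv₁, hΦid v₂ hv₂]
      abel
    have hMw : M.mulVec (w + β • (J0 N).mulVec v₁) = w := by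
      rw [← hΦw, Matrix.mulVec_mulVec, hw']
    have key : β * omega0 v₁ ((J0 N).mulVec v₁) = 0 := by
      have h1 : omega0 v₁ w
          = omega0 (M.mulVec v₁) (M.mulVec (w + β • (J0 N).mulVec v₁)) := by
        rw [hEker v₁ hv₁, hMw]
      rw [symp_inv hM] at h1
      simp only [omega0, dotProduct_add, dotProduct_smul,
        smul_eq_mul] at h1
      simp only [omega0]
      linarith
    have hdp : (J0 N).mulVec v₁ ⬝ᵥ (J0 N).mulVec v₁ = 0 := by
      have : omega0 v₁ ((J0 N).mulVec v₁) = 0 := by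
        rcases mul_eq_zero.mp key with h | h
        · exact absurd h hβ
        · exact h
      simpa [omega0] using this
    have hv10 : v₁ = 0 := J0_mulVec_eq_zero (dotProduct_self_eq_zero.mp hdp)
    have hwv2 : w = v₂ := by rw [← hsum, hv10, zero_add]
    have hMww : M.mulVec w = w := by
      have hΦw' : Φ.mulVec w = w := by rw [hwv2]; exact hΦid v₂ hv₂
      have h2 : M.mulVec w = (M * Φ).mulVec w := by
        rw [← Matrix.mulVec_mulVec, hΦw']
      rw [h2, hw']
    refine ⟨?_, hwv2 ▸ hv₂⟩
    show M.mulVecLin w - LinearMap.id w = 0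
    simp only [Matrix.mulVecLin_apply, LinearMap.id_apply, sub_eq_zero]
    exact hMww
  · rintro w ⟨hker, hwG⟩
    have hwG' : w ∈ G := hwG
    have hker2 : w ∈ LinearMap.ker (M.mulVecLin - (LinearMap.id : (V N → ℝ) →ₗ[ℝ] (V N → ℝ))) := hker
    have hker' : M.mulVec w = w := by
      have h0 := LinearMap.mem_ker.mp hker2
      simp only [LinearMap.sub_apply, LinearMap.id_apply, Matrix.mulVecLin_apply,
        sub_eq_zero] at h0
      exact h0
    show (M * Φ).mulVecLin w - LinearMap.id w = 0
    simp only [Matrix.mulVecLin_apply, LinearMap.id_apply, sub_eq_zero]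
    rw [← Matrix.mulVec_mulVec, hΦid w hwG', hker']
end

section
/- Let M ∈ Sp(2N), let E ⊂ ker(M − I) be a symplectic subspace of (R^{2N}, ω₀), let F be the symplectic orthogonal of E, and let J be a complex structure on E compatible with ω₀|_E. For 0 < ε < π, let Φ ∈ Sp(2N) act as exp(Jε) on E and as the identity on F. Then ker(MΦ − I) = ker(M − I) ∩ F. -/
open Matrix

lemma omega0_self {N : ℕ} (u : V N → ℝ) : omega0 u u = 0 := by
  have h : omega0 u u = - omega0 u u := by
    unfold omega0
    conv_lhs => rw [dotProduct_comm, Matrix.dotProduct_mulVec,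
      ← Matrix.mulVec_transpose, J0_transpose]
    simp [Matrix.neg_mulVec]
  linarith

lemma omega0_sympl {N : ℕ} {M : Matrix (V N) (V N) ℝ} (hM : IsSymplectic M)
    (u w : V N → ℝ) : omega0 (M.mulVec u) (M.mulVec w) = omega0 u w := by
  unfold omega0
  rw [Matrix.mulVec_mulVec, Matrix.dotProduct_mulVec, ← Matrix.mulVec_transpose,
    Matrix.mulVec_mulVec]
  rw [← Matrix.mul_assoc, hM]

lemma omega0_sub {N : ℕ} (u x y : V N → ℝ) :
    omega0 u (x - y) = omega0 u x - omega0 u y := by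
  simp [omega0, dotProduct_sub]

lemma omega0_smul {N : ℕ} (u : V N → ℝ) (a : ℝ) (x : V N → ℝ) :
    omega0 u (a • x) = a * omega0 u x := by
  simp [omega0, dotProduct_smul]

/-- Let `E ⊂ ker(M−I)` be a symplectic subspace, `F` its symplectic orthogonal
(so `ℝ^{2N} = E ⊕ F`), and `J` a complex structure on `E` compatible with
`ω₀|_E`. For `0 < ε < π`, let `Φ ∈ Sp(2N)` act as `exp(Jε)` on `E` (i.e. as
`cos ε + (sin ε) J`, since `J² = −Id` on `E`) and as the identity on `F`.
Then `ker(MΦ − I) = ker(M − I) ∩ F`. -/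
theorem stmt11 {N : ℕ} (M Φ : Matrix (V N) (V N) ℝ) (ε : ℝ)
    (hε : 0 < ε) (hε' : ε < Real.pi)
    (E F : Submodule ℝ (V N → ℝ)) (J : (V N → ℝ) →ₗ[ℝ] (V N → ℝ))
    (hM : IsSymplectic M) (hΦ : IsSymplectic Φ)
    (hEker : ∀ v ∈ E, M.mulVec v = v)
    (hEsympl : ∀ v ∈ E, v ≠ 0 → ∃ w ∈ E, omega0 v w ≠ 0)
    (hF : ∀ w, w ∈ F ↔ ∀ v ∈ E, omega0 w v = 0)
    (hspan : E ⊔ F = ⊤) (hdisj : E ⊓ F = ⊥)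
    (hJE : ∀ v ∈ E, J v ∈ E)
    (hJ2 : ∀ v ∈ E, J (J v) = -v)
    (hJcompat : ∀ u ∈ E, ∀ v ∈ E, omega0 (J u) (J v) = omega0 u v)
    (hJpos : ∀ v ∈ E, v ≠ 0 → 0 < omega0 v (J v))
    (hΦE : ∀ v ∈ E, Φ.mulVec v = Real.cos ε • v + Real.sin ε • J v)
    (hΦF : ∀ v ∈ F, Φ.mulVec v = v) :
    LinearMap.ker ((M * Φ).mulVecLin - LinearMap.id) =
      LinearMap.ker (M.mulVecLin - LinearMap.id) ⊓ F := by
  have hsin : 0 < Real.sin ε := Real.sin_pos_of_pos_of_lt_pi hε hε'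
  ext v
  simp only [LinearMap.mem_ker, Submodule.mem_inf, LinearMap.sub_apply,
    LinearMap.id_apply, Matrix.mulVecLin_apply, sub_eq_zero]
  constructor
  · intro hv
    have hvmem : v ∈ E ⊔ F := by rw [hspan]; exact Submodule.mem_top
    obtain ⟨e, he, f, hf, hef⟩ := Submodule.mem_sup.mp hvmem
    have hMΦ : M.mulVec (Φ.mulVec v) = v := by
      rw [Matrix.mulVec_mulVec]; exact hv
    have hΦv : Φ.mulVec v = (Real.cos ε • e + Real.sin ε • J e) + f := by
      rw [← hef, Matrix.mulVec_add, hΦE e he, hΦF f hf]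
    have hJe : J e ∈ E := hJE e he
    have key : M.mulVec f - f = (1 - Real.cos ε) • e - Real.sin ε • J e := by
      have h1 : M.mulVec (Φ.mulVec v) =
          (Real.cos ε • e + Real.sin ε • J e) + M.mulVec f := by
        rw [hΦv, Matrix.mulVec_add, Matrix.mulVec_add, Matrix.mulVec_smul,
          Matrix.mulVec_smul, hEker e he, hEker _ hJe]
      rw [hMΦ, ← hef] at h1
      have := h1.symm
      funext i
      have hi := congrFun this i
      simp only [Pi.add_apply, Pi.smul_apply, Pi.sub_apply, smul_eq_mul] at hi ⊢
      linarith
    have hMe : M.mulVec e = e := hEker e he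
    have horth : omega0 e (M.mulVec f - f) = 0 := by
      rw [omega0_sub]
      have : omega0 e (M.mulVec f) = omega0 e f := by
        conv_lhs => rw [← hMe]
        exact omega0_sympl hM e f
      rw [this]; ring
    rw [key, omega0_sub, omega0_smul, omega0_smul, omega0_self] at horth
    have hsz : Real.sin ε * omega0 e (J e) = 0 := by linarith
    have he0 : e = 0 := by
      by_contra hne
      have := hJpos e he hne
      nlinarith
    have hvf : v = f := by rw [← hef, he0, zero_add]
    have hMf : M.mulVec f = f := by
      have h := key
      rw [he0] at h
      have h' : M.mulVec f - f = 0 := by simpa using h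
      exact sub_eq_zero.mp h'
    exact ⟨by rw [hvf]; exact hMf, hvf ▸ hf⟩
  · rintro ⟨hker, hvF⟩
    rw [← Matrix.mulVec_mulVec, hΦF v hvF, hker]
end

section
/- Let Ψ ∈ Sp(2n), X ∈ Mat_{2n,m}(R), E ∈ Mat_m(R) symmetric, and suppose the path endpoint matrix M = M(Ψ,X,E) ∈ 𝒮_{n,m} satisfies dim ker(M − I) = m (i.e. M ∈ 𝒮⁰_{n,m}). For θ ∈ [0,ε] define M'(θ) := [[Ψ, ΨX, θΨX],[0, I, θI],[XᵀJ₀, E + (1/2)XᵀJ₀X, I + θ(E + (1/2)XᵀJ₀X)]]. Then det(M'(ε) − I) = ε^m (−1)^m det([[Ψ − I, ΨX],[XᵀJ₀, E + (1/2)XᵀJ₀X]]). -/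
open Matrix

lemma detS (m : ℕ) :
    (Matrix.fromBlocks (0 : Matrix (Fin m) (Fin m) ℝ) (1 : Matrix (Fin m) (Fin m) ℝ)
      (1 : Matrix (Fin m) (Fin m) ℝ) (0 : Matrix (Fin m) (Fin m) ℝ)).det = (-1 : ℝ) ^ m := by
  have hfac : Matrix.fromBlocks (0 : Matrix (Fin m) (Fin m) ℝ) (1 : Matrix (Fin m) (Fin m) ℝ)
      (1 : Matrix (Fin m) (Fin m) ℝ) (0 : Matrix (Fin m) (Fin m) ℝ) =
      Matrix.fromBlocks (1 : Matrix (Fin m) (Fin m) ℝ) 1 0 1 *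
        Matrix.fromBlocks (1 : Matrix (Fin m) (Fin m) ℝ) 0 (-1) 1 *
        Matrix.fromBlocks (1 : Matrix (Fin m) (Fin m) ℝ) 1 0 1 *
        Matrix.fromBlocks (-1 : Matrix (Fin m) (Fin m) ℝ) 0 0 1 := by
    simp [Matrix.fromBlocks_multiply]
  rw [hfac]
  simp [Matrix.det_mul, Matrix.det_fromBlocks_zero₂₁, Matrix.det_fromBlocks_zero₁₂,
    Matrix.det_neg]

theorem stmt19_aux {n m : ℕ} (Ψ : Matrix (V n) (V n) ℝ) (X : Matrix (V n) (Fin m) ℝ)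
    (C : Matrix (Fin m) (Fin m) ℝ) (ε : ℝ) :
    (Matrix.fromBlocks Ψ (Matrix.fromCols (Ψ * X) (ε • (Ψ * X)))
        (Matrix.fromRows 0 (Xᵀ * J0 n))
        (Matrix.fromBlocks 1 (ε • (1 : Matrix (Fin m) (Fin m) ℝ)) C (1 + ε • C)) -
        1).det =
      ε ^ m * (-1 : ℝ) ^ m * (Matrix.fromBlocks (Ψ - 1) (Ψ * X) (Xᵀ * J0 n) C).det := by
  set A := Ψ - 1 with hA
  set B := Ψ * X with hB
  set D := Xᵀ * J0 n with hD
  set A' : Matrix (V n ⊕ V m) (V n ⊕ V m) ℝ :=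
    Matrix.fromBlocks A (Matrix.fromCols B 0) (Matrix.fromRows 0 D)
      (Matrix.fromBlocks 0 (ε • (1 : Matrix (Fin m) (Fin m) ℝ)) C 0) with hA'
  set U : Matrix (V n ⊕ V m) (V n ⊕ V m) ℝ :=
    Matrix.fromBlocks 1 0 0
      (Matrix.fromBlocks 1 (ε • (1 : Matrix (Fin m) (Fin m) ℝ)) 0 1) with hU
  set S : Matrix (V m) (V m) ℝ := Matrix.fromBlocks 0 1 1 0 with hS
  set Q : Matrix (V n ⊕ V m) (V n ⊕ V m) ℝ := Matrix.fromBlocks 1 0 0 S with hQ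
  set A3 : Matrix (V n ⊕ V m) (V n ⊕ V m) ℝ :=
    Matrix.fromBlocks A (Matrix.fromCols B 0) (Matrix.fromRows D 0)
      (Matrix.fromBlocks C 0 0 (ε • (1 : Matrix (Fin m) (Fin m) ℝ))) with hA3
  -- Step 1 : M' - 1 = A' * U
  have h1 : Matrix.fromBlocks Ψ (Matrix.fromCols B (ε • B))
        (Matrix.fromRows 0 D)
        (Matrix.fromBlocks 1 (ε • (1 : Matrix (Fin m) (Fin m) ℝ)) C (1 + ε • C)) -
        1 = A' * U := by
    rw [hA', hU, Matrix.fromBlocks_multiply, ← Matrix.fromBlocks_one,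
      sub_eq_add_neg, Matrix.fromBlocks_neg, Matrix.fromBlocks_add,
      ← Matrix.fromBlocks_one (l := Fin m) (m := Fin m),
      Matrix.fromBlocks_neg, Matrix.fromBlocks_add,
      Matrix.fromCols_mul_fromBlocks, Matrix.fromBlocks_multiply]
    congr 1
    all_goals simp [mul_smul_comm, hA, sub_eq_add_neg]
  have hdetU : U.det = 1 := by
    rw [hU, Matrix.det_fromBlocks_zero₂₁, Matrix.det_fromBlocks_zero₂₁]
    simp
  -- Step 2 : Q * A' = A3
  have h2 : Q * A' = A3 := by
    rw [hQ, hA', hA3, hS, Matrix.fromBlocks_multiply, Matrix.fromBlocks_mul_fromRows,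
      Matrix.fromBlocks_multiply]
    congr 1
    all_goals simp
  have hdetQ : Q.det = (-1 : ℝ) ^ m := by
    rw [hQ, Matrix.det_fromBlocks_zero₂₁, hS, Matrix.det_one, one_mul]
    exact detS m
  -- Step 3 : det A3 via regrouping
  have h3 : A3.det = (Matrix.fromBlocks A B D C).det * ε ^ m := by
    have he : A3.submatrix (Equiv.sumAssoc (V n) (Fin m) (Fin m))
        (Equiv.sumAssoc (V n) (Fin m) (Fin m)) =
        Matrix.fromBlocks (Matrix.fromBlocks A B D C) 0 0
          (ε • (1 : Matrix (Fin m) (Fin m) ℝ)) := by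
      ext i j
      rcases i with (i | i) | i <;> rcases j with (j | j) | j <;>
        simp [hA3, Matrix.fromBlocks, Equiv.sumAssoc]
    calc A3.det = (A3.submatrix (Equiv.sumAssoc (V n) (Fin m) (Fin m))
          (Equiv.sumAssoc (V n) (Fin m) (Fin m))).det := by
          rw [Matrix.det_submatrix_equiv_self]
      _ = (Matrix.fromBlocks A B D C).det * ε ^ m := by
          rw [he, Matrix.det_fromBlocks_zero₂₁, Matrix.det_smul]
          simp
  -- assemble
  have h4 : A'.det = (-1 : ℝ) ^ m * ((Matrix.fromBlocks A B D C).det * ε ^ m) := by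
    have := congrArg Matrix.det h2
    rw [Matrix.det_mul, hdetQ, h3] at this
    have hsq : ((-1 : ℝ) ^ m) * ((-1 : ℝ) ^ m) = 1 := by
      rw [← pow_add, ← two_mul, pow_mul]; norm_num
    calc A'.det = (((-1:ℝ)^m) * ((-1:ℝ)^m)) * A'.det := by rw [hsq, one_mul]
      _ = ((-1:ℝ)^m) * (((-1:ℝ)^m) * A'.det) := by ring
      _ = (-1 : ℝ) ^ m * ((Matrix.fromBlocks A B D C).det * ε ^ m) := by rw [this]
  rw [h1, Matrix.det_mul, hdetU, mul_one, h4]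
  ring

/-- If `M = M(Ψ,X,E)` satisfies `dim ker(M − I) = m`, then for the extension
path `M'(θ)` one has
`det(M'(ε) − I) = ε^m (−1)^m det [[Ψ − I, ΨX],[XᵀJ₀, E + ½XᵀJ₀X]]`. -/
theorem stmt19 {n m : ℕ} (Ψ : Matrix (V n) (V n) ℝ) (X : Matrix (V n) (Fin m) ℝ)
    (E : Matrix (Fin m) (Fin m) ℝ) (hΨ : IsSymplectic Ψ) (hE : Eᵀ = E)
    (hker : Module.finrank ℝ
      (LinearMap.ker ((Mblk Ψ X E).mulVecLin - LinearMap.id)) = m)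
    (ε : ℝ) (hε : 0 ≤ ε) :
    (let Cm : Matrix (Fin m) (Fin m) ℝ := E + (1 / 2 : ℝ) • (Xᵀ * J0 n * X);
    let M' : Matrix (V n ⊕ V m) (V n ⊕ V m) ℝ :=
      Matrix.fromBlocks Ψ (Matrix.fromCols (Ψ * X) (ε • (Ψ * X)))
        (Matrix.fromRows 0 (Xᵀ * J0 n))
        (Matrix.fromBlocks 1 (ε • (1 : Matrix (Fin m) (Fin m) ℝ)) Cm (1 + ε • Cm));
    (M' - 1).det =
      ε ^ m * (-1 : ℝ) ^ m *
        (Matrix.fromBlocks (Ψ - 1) (Ψ * X) (Xᵀ * J0 n) Cm).det) := by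
  exact stmt19_aux Ψ X (E + (1 / 2 : ℝ) • (Xᵀ * J0 n * X)) ε
end
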